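/- Let f = (f_0, f_1, f_2, …) ∈ U_FM(T, E^ℕ), where each f_j ∈ H(T,E) and E^ℕ carries the product topology induced by the translation-invariant metric d̃(x,y) = Σ_{n} 2^{-n} d(x_n,y_n)/(1+d(x_n,y_n)). Then every non-zero finite 𝔽-linear combination a_1 f_{j_1} + … + a_m f_{j_m} of the components f_j belongs to U_FM(T,E); that is, the linear span ⟨f_0, f_1, …⟩ is contained in U_FM(T,E) ∪ {0}. -/

import Mathlib

open MeasureTheory Filter Topology

/-- A rooted tree with finite levels `T n`, a singleton root level, a parent map,
and at least two children for every vertex. -/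
structure TreeData where
  T : ℕ → Type
  fint : ∀ n, Fintype (T n)
  rootSubsingleton : ∀ x y : T 0, x = y
  rootNonempty : Nonempty (T 0)
  par : ∀ n, T (n + 1) → T n
  twoChildren : ∀ n (x : T n), 2 ≤ Nat.card {y : T (n + 1) // par n y = x}

instance (D : TreeData) (n : ℕ) : Fintype (D.T n) := D.fint n

noncomputable instance (D : TreeData) (n : ℕ) (x : D.T n) :
    Fintype {y : D.T (n + 1) // D.par n y = x} := by
  classical exact Subtype.fintype _

/-- The set of vertices of the tree. -/
def TreeData.Vert (D : TreeData) : Type := Σ n, D.T n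

/-- The boundary `∂T` : infinite geodesics starting at the root. -/
def TreeData.Boundary (D : TreeData) : Type :=
  {e : ∀ n, D.T n // ∀ n, D.par n (e (n + 1)) = e n}

/-- The boundary sector `B_x` of geodesics through `x`. -/
def TreeData.sector (D : TreeData) (n : ℕ) (x : D.T n) : Set D.Boundary :=
  {e | e.1 n = x}

/-- The σ-algebra `M_m` generated by the sectors at level `m`. -/
def TreeData.levelMS (D : TreeData) (m : ℕ) : MeasurableSpace D.Boundary :=
  MeasurableSpace.generateFrom {s | ∃ x : D.T m, s = D.sector m x}

/-- The σ-algebra `M` generated by all boundary sectors. -/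
instance TreeData.boundaryMS (D : TreeData) : MeasurableSpace D.Boundary :=
  MeasurableSpace.generateFrom {s | ∃ n, ∃ x : D.T n, s = D.sector n x}

/-- The probability `∏_{j<n} q(y_j, y_{j+1})` of the path from the root to a vertex. -/
def TreeData.pathProb (D : TreeData) (q : ∀ n, D.T (n + 1) → ℝ) :
    ∀ n, D.T n → ℝ
  | 0, _ => 1
  | n + 1, y => D.pathProb q n (D.par n y) * q n y

/-- `f : T → E` is generalized harmonic: `f x = ∑_{y ∈ S x} w x y • f y`. -/
def TreeData.Harmonic (D : TreeData) {𝔽 E : Type} [Field 𝔽] [AddCommGroup E]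
    [Module 𝔽 E] (w : ∀ n, D.T (n + 1) → 𝔽) (f : D.Vert → E) : Prop :=
  ∀ n (x : D.T n),
    f ⟨n, x⟩ = ∑ y : {y : D.T (n + 1) // D.par n y = x}, w n y.1 • f ⟨n + 1, y.1⟩

/-- The set `H(T,E)` of generalized harmonic functions. -/
def TreeData.harmonicSet (D : TreeData) {𝔽 : Type} (E : Type) [Field 𝔽] [AddCommGroup E]
    [Module 𝔽 E] (w : ∀ n, D.T (n + 1) → 𝔽) : Set (D.Vert → E) :=
  {f | D.Harmonic w f}

/-- `ω_n(f) : ∂T → E`. -/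
def TreeData.omegaMap (D : TreeData) {E : Type} (f : D.Vert → E) (n : ℕ)
    (e : D.Boundary) : E := f ⟨n, e.1 n⟩

/-- The pseudometric of convergence in probability associated to a distance `ρ`. -/
noncomputable def TreeData.dPgen (D : TreeData) (P : Measure D.Boundary) {α : Type}
    (ρ : α → α → ℝ) (h g : D.Boundary → α) : ℝ :=
  ∫ e, ρ (h e) (g e) / (1 + ρ (h e) (g e)) ∂P

/-- The metric `d_ℙ` of convergence in probability on `L⁰(∂T, E)`. -/
noncomputable def TreeData.dP (D : TreeData) (P : Measure D.Boundary) {E : Type}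
    [MetricSpace E] (h g : D.Boundary → E) : ℝ :=
  D.dPgen P dist h g

/-- The translation invariant metric `d̃` on `E ^ ℕ` inducing the product topology. -/
noncomputable def dTilde {E : Type} [MetricSpace E] (x y : ℕ → E) : ℝ :=
  ∑' n : ℕ, (1 / 2 : ℝ) ^ n * (dist (x n) (y n) / (1 + dist (x n) (y n)))

/-- Lower density of a set of natural numbers. -/
noncomputable def lowerDensity (A : Set ℕ) : ℝ :=
  Filter.liminf (fun N : ℕ => ((A ∩ Set.Iio N).ncard : ℝ) / N) Filter.atTop

/-- Upper density of a set of natural numbers. -/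
noncomputable def upperDensity (A : Set ℕ) : ℝ :=
  Filter.limsup (fun N : ℕ => ((A ∩ Set.Iio N).ncard : ℝ) / N) Filter.atTop

/-- `f ∈ U_τ(T,E)` : the family `(ω_n f)_{n ∈ τ}` is dense in `L⁰(∂T,E)`. -/
def TreeData.UnivOn (D : TreeData) (P : Measure D.Boundary) {E : Type}
    [MetricSpace E] [MeasurableSpace E] (τ : Set ℕ) (f : D.Vert → E) : Prop :=
  ∀ h : D.Boundary → E, Measurable h → ∀ ε > 0, ∃ n ∈ τ, D.dP P (D.omegaMap f n) h < ε

/-- `f ∈ U_FM(T,E)` : for every nonempty open subset `V` of `L⁰(∂T,E)` (equivalently,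
every ball) the set `{n | ω_n f ∈ V}` has strictly positive lower density. -/
def TreeData.FreqUniv (D : TreeData) (P : Measure D.Boundary) {E : Type}
    [MetricSpace E] [MeasurableSpace E] (f : D.Vert → E) : Prop :=
  ∀ h : D.Boundary → E, Measurable h → ∀ ε > 0,
    0 < lowerDensity {n | D.dP P (D.omegaMap f n) h < ε}

/-- `f ∈ U_FM^τ(T,E)` for `τ` enumerated by `ns`. -/
def TreeData.FreqUnivAlong (D : TreeData) (P : Measure D.Boundary) {E : Type}
    [MetricSpace E] [MeasurableSpace E] (ns : ℕ → ℕ) (f : D.Vert → E) : Prop :=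
  ∀ h : D.Boundary → E, Measurable h → ∀ ε > 0,
    0 < lowerDensity {k | D.dP P (D.omegaMap f (ns k)) h < ε}

/-- `f ∈ X(T,E)` : for every nonempty open subset `V` of `L⁰(∂T,E)` (equivalently,
every ball) the set `{n | ω_n f ∈ V}` has upper density `1`. -/
def TreeData.UpperUniv (D : TreeData) (P : Measure D.Boundary) {E : Type}
    [MetricSpace E] [MeasurableSpace E] (f : D.Vert → E) : Prop :=
  ∀ h : D.Boundary → E, Measurable h → ∀ ε > 0,
    upperDensity {n | D.dP P (D.omegaMap f n) h < ε} = 1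

/-- `f ∈ U_FM(T, E^ℕ)` where `E^ℕ` carries the metric `d̃`. -/
def TreeData.FreqUnivPi (D : TreeData) (P : Measure D.Boundary) {E : Type}
    [MetricSpace E] [MeasurableSpace E] (f : D.Vert → (ℕ → E)) : Prop :=
  ∀ h : D.Boundary → (ℕ → E), Measurable h → ∀ ε > 0,
    0 < lowerDensity {n | D.dPgen P dTilde (D.omegaMap f n) h < ε}

variable {𝔽 E : Type} [Field 𝔽] [TopologicalSpace 𝔽] [T2Space 𝔽]
  [TopologicalSpace.SeparableSpace 𝔽] [ContinuousAdd 𝔽] [ContinuousInv₀ 𝔽]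
  [AddCommGroup E] [Module 𝔽 E] [MetricSpace E]
  [TopologicalSpace.SeparableSpace E] [ContinuousAdd E] [ContinuousSMul 𝔽 E]
  [MeasurableSpace E] [BorelSpace E]

section Aux

lemma ratio_mono' {t s : ℝ} (ht : 0 ≤ t) (hts : t ≤ s) : t / (1 + t) ≤ s / (1 + s) := by
  have h1 : (0:ℝ) < 1 + t := by linarith
  have h2 : (0:ℝ) < 1 + s := by linarith
  rw [div_le_div_iff₀ h1 h2]; nlinarith

lemma ratio_le_one' {t : ℝ} (ht : 0 ≤ t) : t / (1 + t) ≤ 1 := by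
  have h1 : (0:ℝ) < 1 + t := by linarith
  rw [div_le_one h1]; linarith

lemma ratio_nonneg' {t : ℝ} (ht : 0 ≤ t) : 0 ≤ t / (1 + t) :=
  div_nonneg ht (by linarith)

lemma Iio_ncard' (N : ℕ) : (Set.Iio N).ncard = N := by
  simp [Set.ncard_eq_toFinset_card']

lemma ld_le_one {A : Set ℕ} (N : ℕ) : ((A ∩ Set.Iio N).ncard : ℝ) / N ≤ 1 := by
  rcases Nat.eq_zero_or_pos N with h | h
  · simp [h]
  · rw [div_le_one (by exact_mod_cast h)]
    have : (A ∩ Set.Iio N).ncard ≤ N := by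
      calc (A ∩ Set.Iio N).ncard ≤ (Set.Iio N).ncard :=
            Set.ncard_le_ncard Set.inter_subset_right (Set.finite_Iio N)
        _ = N := Iio_ncard' N
    exact_mod_cast this

lemma lowerDensity_mono {A B : Set ℕ} (h : A ⊆ B) : lowerDensity A ≤ lowerDensity B := by
  refine liminf_le_liminf (Filter.Eventually.of_forall fun N => ?_) ?_ ?_
  · have hcard : ((A ∩ Set.Iio N).ncard : ℝ) ≤ ((B ∩ Set.Iio N).ncard : ℝ) := by
      exact_mod_cast Set.ncard_le_ncard (Set.inter_subset_inter_left _ h)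
        ((Set.finite_Iio N).inter_of_right _)
    exact div_le_div_of_nonneg_right hcard (Nat.cast_nonneg N)
  · refine Filter.isBoundedUnder_of ⟨0, fun (N : ℕ) => ?_⟩
    show ((A ∩ Set.Iio N).ncard : ℝ) / N ≥ 0
    positivity
  · exact isCoboundedUnder_ge_of_le _ fun N => ld_le_one N

/-- Any function of the level-`n` coordinate is measurable on the boundary. -/
lemma measurable_level_comp (D : TreeData) {β : Type} [MeasurableSpace β]
    (n : ℕ) (φ : D.T n → β) : Measurable fun e : D.Boundary => φ (e.1 n) := by
  intro s _
  have h : (fun e : D.Boundary => φ (e.1 n)) ⁻¹' s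
      = ⋃ x ∈ {x : D.T n | φ x ∈ s}, D.sector n x := by
    ext e
    simp only [Set.mem_preimage, Set.mem_iUnion, Set.mem_setOf_eq, TreeData.sector]
    constructor
    · intro he; exact ⟨e.1 n, he, rfl⟩
    · rintro ⟨x, hx, hex⟩; rw [hex]; exact hx
  rw [h]
  refine MeasurableSet.biUnion (Set.to_countable _) fun x _ => ?_
  exact MeasurableSpace.measurableSet_generateFrom ⟨n, x, rfl⟩

lemma integrable_ratio {α : Type} [MeasurableSpace α] (P : Measure α) [IsProbabilityMeasure P]
    {r : α → ℝ} (hr : Measurable r) (hr0 : ∀ e, 0 ≤ r e) :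
    Integrable (fun e => r e / (1 + r e)) P := by
  have hm : Measurable fun e => r e / (1 + r e) := hr.div (measurable_const.add hr)
  refine Integrable.mono' (integrable_const (1:ℝ)) hm.aestronglyMeasurable ?_
  filter_upwards with e
  rw [Real.norm_eq_abs, abs_of_nonneg (ratio_nonneg' (hr0 e))]
  exact ratio_le_one' (hr0 e)

/-- Markov-type inequality for the probability-metric integrand. -/
lemma meas_ge_le {α : Type} [MeasurableSpace α] (P : Measure α) [IsProbabilityMeasure P]
    {r : α → ℝ} (hr : Measurable r) (hr0 : ∀ e, 0 ≤ r e) {δ : ℝ} (hδ : 0 < δ) :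
    (P {e | δ ≤ r e}).toReal ≤ (1 + δ) / δ * ∫ e, r e / (1 + r e) ∂P := by
  have hsub : {e | δ ≤ r e} ⊆ {e | δ / (1 + δ) ≤ r e / (1 + r e)} :=
    fun e he => ratio_mono' hδ.le he
  have hmarkov := mul_meas_ge_le_integral_of_nonneg
    (μ := P) (f := fun e => r e / (1 + r e))
    (Filter.Eventually.of_forall fun e => ratio_nonneg' (hr0 e))
    (integrable_ratio P hr hr0) (δ / (1 + δ))
  have hmono : (P {e | δ ≤ r e}).toReal
      ≤ (P {e | δ / (1 + δ) ≤ r e / (1 + r e)}).toReal := by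
    apply ENNReal.toReal_mono (measure_ne_top P _) (measure_mono hsub)
  have hpos : 0 < δ / (1 + δ) := div_pos hδ (by linarith)
  calc (P {e | δ ≤ r e}).toReal
      ≤ (P {e | δ / (1 + δ) ≤ r e / (1 + r e)}).toReal := hmono
    _ = (1 + δ) / δ * (δ / (1 + δ) * (P {e | δ / (1 + δ) ≤ r e / (1 + r e)}).toReal) := by
        field_simp
    _ ≤ (1 + δ) / δ * ∫ e, r e / (1 + r e) ∂P := by
        apply mul_le_mul_of_nonneg_left hmarkov
        positivity

/-- Translation-invariance consequences. -/
lemma dist_eq_sub {E : Type} [AddCommGroup E] [MetricSpace E]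
    (hdist : ∀ a x y : E, dist (a + x) (a + y) = dist x y) (x y : E) :
    dist x y = dist (x - y) 0 := by
  have := hdist y (x - y) 0
  simpa [add_sub_cancel] using this

lemma dist_sum_le {E ι : Type} [AddCommGroup E] [MetricSpace E]
    (hdist : ∀ a x y : E, dist (a + x) (a + y) = dist x y)
    (s : Finset ι) (u v : ι → E) :
    dist (∑ i ∈ s, u i) (∑ i ∈ s, v i) ≤ ∑ i ∈ s, dist (u i) (v i) := by
  classical
  induction s using Finset.induction_on with
  | empty => simp
  | insert _ _ hns ih =>
    rename_i a s'
    rw [Finset.sum_insert hns, Finset.sum_insert hns, Finset.sum_insert hns]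
    calc dist (u a + ∑ i ∈ s', u i) (v a + ∑ i ∈ s', v i)
        ≤ dist (u a + ∑ i ∈ s', u i) (u a + ∑ i ∈ s', v i)
          + dist (u a + ∑ i ∈ s', v i) (v a + ∑ i ∈ s', v i) := dist_triangle _ _ _
      _ ≤ dist (u a) (v a) + ∑ i ∈ s', dist (u i) (v i) := by
          rw [hdist]
          have : dist (u a + ∑ i ∈ s', v i) (v a + ∑ i ∈ s', v i)
              = dist (u a) (v a) := by
            rw [add_comm (u a) _, add_comm (v a) _, hdist]
          rw [this, add_comm]
          exact add_le_add le_rfl ih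
end Aux

set_option maxHeartbeats 1000000

/-- Assume Σ_{y ∈ S(x)} w(x,y) = 1. If f = (f₀, f₁, …) ∈ U_FM(T, E^ℕ)
with each component f_j ∈ H(T,E), then the linear span of the components is contained
in U_FM(T,E) ∪ {0}. -/
theorem span_of_components_freqUniv (D : TreeData)
    (w : ∀ n, D.T (n + 1) → 𝔽) (hw : ∀ n y, w n y ≠ 0)
    (hdist : ∀ a x y : E, dist (a + x) (a + y) = dist x y)
    (q : ∀ n, D.T (n + 1) → ℝ) (hq0 : ∀ n y, 0 < q n y)
    (hq1 : ∀ n (x : D.T n), ∑ y : {y : D.T (n + 1) // D.par n y = x}, q n y.1 = 1)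
    (P : Measure D.Boundary) [IsProbabilityMeasure P]
    (hP : ∀ n (x : D.T n), P (D.sector n x) = ENNReal.ofReal (D.pathProb q n x))
    (hw1 : ∀ n (x : D.T n), ∑ y : {y : D.T (n + 1) // D.par n y = x}, w n y.1 = 1)
    (f : D.Vert → (ℕ → E))
    (hharm : D.Harmonic w f)
    (hcomp : ∀ j : ℕ, (fun v => f v j) ∈ D.harmonicSet E w)
    (hfm : D.FreqUnivPi P f) :
    ∀ g : D.Vert → E,
      g ∈ Submodule.span 𝔽 {g' : D.Vert → E | ∃ j : ℕ, g' = fun v => f v j} →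
      g ≠ 0 → D.FreqUniv P g := by
  classical
  haveI : SecondCountableTopology E := UniformSpace.secondCountable_of_separable E
  intro g hg hg0
  set F : ℕ → D.Vert → E := fun j v => f v j with hFdef
  have hSet : {g' : D.Vert → E | ∃ j : ℕ, g' = fun v => f v j} = Set.range F := by
    ext g'
    constructor
    · rintro ⟨j, rfl⟩; exact ⟨j, rfl⟩
    · rintro ⟨j, rfl⟩; exact ⟨j, rfl⟩
  rw [hSet] at hg
  obtain ⟨c, hc⟩ := Finsupp.mem_span_range_iff_exists_finsupp.1 hg
  have hgsum : ∀ v, g v = ∑ j ∈ c.support, c j • F j v := by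
    intro v
    rw [← hc, Finsupp.sum]
    simp [Finset.sum_apply]
  have hcne : c ≠ 0 := by
    rintro rfl
    apply hg0
    rw [← hc]
    simp
  obtain ⟨j₀, hj₀⟩ : ∃ j₀, c j₀ ≠ 0 := by
    by_contra hall
    push_neg at hall
    exact hcne (Finsupp.ext hall)
  intro h hmeas ε hε
  set s := c.support with hs
  have hj₀s : j₀ ∈ s := Finsupp.mem_support_iff.2 hj₀
  have hm0 : 0 < (s.card : ℝ) := by
    have : 0 < s.card := Finset.card_pos.2 ⟨j₀, hj₀s⟩
    exact_mod_cast this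
  -- δ j from continuity of (c j • ·) at 0
  have hcont : ∀ j : ℕ, ∃ δ : ℝ, 0 < δ ∧
      ∀ u : E, dist u 0 < δ → dist (c j • u) 0 < ε / 2 / s.card := by
    intro j
    have hc0 : ContinuousAt (fun u : E => c j • u) 0 :=
      (continuous_const_smul (c j)).continuousAt
    rw [Metric.continuousAt_iff] at hc0
    obtain ⟨δ, hδ0, hδ⟩ := hc0 (ε / 2 / s.card) (by positivity)
    exact ⟨δ, hδ0, fun u hu => by simpa using hδ hu⟩
  choose δ hδpos hδ using hcont
  -- the target function H
  set H : D.Boundary → ℕ → E := fun e k => if k = j₀ then (c j₀)⁻¹ • h e else 0 with hH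
  have hHmeasj : ∀ k, Measurable fun e => H e k := by
    intro k
    by_cases hk : k = j₀
    · simp only [hH, hk, if_pos]
      exact ((continuous_const_smul ((c j₀)⁻¹)).measurable).comp hmeas
    · simp only [hH, if_neg hk]
      exact measurable_const
  have hHmeas : Measurable H := measurable_pi_lambda _ hHmeasj
  set K : ℝ := ∑ j ∈ s, 2 ^ (j + 1) * ((1 + δ j) / δ j) with hK
  have hK0 : 0 ≤ K := Finset.sum_nonneg fun j _ => by
    have := hδpos j
    positivity
  set δstar : ℝ := ε / (2 * (K + 1)) with hδstar
  have hδstar0 : 0 < δstar := by positivity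
  have hfmH := hfm H hHmeas δstar hδstar0
  refine lt_of_lt_of_le hfmH (lowerDensity_mono ?_)
  intro n hn
  simp only [Set.mem_setOf_eq] at hn ⊢
  -- component distances
  set r : ℕ → D.Boundary → ℝ := fun j e => dist (f ⟨n, e.1 n⟩ j) (H e j) with hr
  have hrmeas : ∀ j, Measurable (r j) := fun j =>
    (measurable_level_comp D n (fun x => f ⟨n, x⟩ j)).dist (hHmeasj j)
  have hr0 : ∀ j e, 0 ≤ r j e := fun j e => dist_nonneg
  -- the dTilde integrand
  set G : D.Boundary → ℝ := fun e => dTilde (D.omegaMap f n e) (H e) with hG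
  have hGeq : ∀ e, G e = ∑' k, (1 / 2 : ℝ) ^ k * (r k e / (1 + r k e)) := fun e => rfl
  have hsummable : ∀ e, Summable fun k => (1 / 2 : ℝ) ^ k * (r k e / (1 + r k e)) := by
    intro e
    refine Summable.of_nonneg_of_le (fun k => ?_) (fun k => ?_) summable_geometric_two
    · have := hr0 k e
      positivity
    · calc (1 / 2 : ℝ) ^ k * (r k e / (1 + r k e)) ≤ (1 / 2 : ℝ) ^ k * 1 := by
            apply mul_le_mul_of_nonneg_left (ratio_le_one' (hr0 k e)) (by positivity)
        _ = (1 / 2 : ℝ) ^ k := mul_one _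
  have hG0 : ∀ e, 0 ≤ G e := by
    intro e
    rw [hGeq]
    refine tsum_nonneg fun k => ?_
    have h1 := hr0 k e
    positivity
  have hGmeas : Measurable G := by
    have hpart : ∀ m : ℕ, Measurable fun e =>
        ∑ k ∈ Finset.range m, (1 / 2 : ℝ) ^ k * (r k e / (1 + r k e)) := by
      intro m
      refine Finset.measurable_sum _ fun k _ => ?_
      exact (measurable_const.mul ((hrmeas k).div (measurable_const.add (hrmeas k))))
    refine measurable_of_tendsto_metrizable hpart (tendsto_pi_nhds.2 fun e => ?_)
    rw [hGeq]
    exact (hsummable e).hasSum.tendsto_sum_nat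
  set Gq : D.Boundary → ℝ := fun e => G e / (1 + G e) with hGq
  have hGqint : Integrable Gq P := integrable_ratio P hGmeas hG0
  have hDn : ∫ e, Gq e ∂P < δstar := by
    rw [TreeData.dPgen] at hn
    exact hn
  have hDn0 : 0 ≤ ∫ e, Gq e ∂P :=
    integral_nonneg fun e => ratio_nonneg' (hG0 e)
  -- componentwise integral bound
  have hcomp_int : ∀ j, ∫ e, r j e / (1 + r j e) ∂P ≤ 2 ^ (j + 1) * ∫ e, Gq e ∂P := by
    intro j
    have hpt : ∀ e, r j e / (1 + r j e) ≤ 2 ^ (j + 1) * Gq e := by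
      intro e
      set t : ℝ := r j e / (1 + r j e) with ht
      have ht0 : 0 ≤ t := ratio_nonneg' (hr0 j e)
      have ht1 : t ≤ 1 := ratio_le_one' (hr0 j e)
      set a : ℝ := (1 / 2 : ℝ) ^ j * t with ha
      have ha0 : 0 ≤ a := by positivity
      have ha1 : a ≤ 1 := by
        calc a ≤ 1 * t := by
              apply mul_le_mul_of_nonneg_right _ ht0
              apply pow_le_one₀ <;> norm_num
          _ = t := one_mul t
          _ ≤ 1 := ht1
      have hGa : a ≤ G e := by
        rw [hGeq]
        exact Summable.le_tsum (hsummable e) j fun k _ => by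
          have := hr0 k e
          positivity
      have h1 : a / 2 ≤ Gq e := by
        calc a / 2 ≤ a / (1 + a) := by
              rcases eq_or_lt_of_le ha0 with h' | h'
              · simp [← h']
              · rw [div_le_div_iff₀ (by norm_num) (by linarith)]
                nlinarith
          _ ≤ G e / (1 + G e) := ratio_mono' ha0 hGa
          _ = Gq e := rfl
      have hpow : (1 / 2 : ℝ) ^ j = (2 : ℝ)⁻¹ ^ j := by norm_num
      have h2 : (0:ℝ) < 2 ^ j := by positivity
      rw [ha] at h1
      calc t = 2 ^ (j + 1) * ((1 / 2 : ℝ) ^ j * t / 2) := by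
            rw [hpow]
            field_simp
            have h3 : (1 / 2 : ℝ) ^ j * 2 ^ j = 1 := by rw [← mul_pow]; norm_num
            linear_combination (-t * 2) * h3
        _ ≤ 2 ^ (j + 1) * Gq e := by
            apply mul_le_mul_of_nonneg_left h1 (by positivity)
    calc ∫ e, r j e / (1 + r j e) ∂P ≤ ∫ e, 2 ^ (j + 1) * Gq e ∂P := by
          refine integral_mono_of_nonneg (Filter.Eventually.of_forall fun e =>
            ratio_nonneg' (hr0 j e)) (hGqint.const_mul _)
            (Filter.Eventually.of_forall hpt)
      _ = 2 ^ (j + 1) * ∫ e, Gq e ∂P := integral_const_mul _ _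
  -- the bad set
  set B : Set D.Boundary := ⋃ j ∈ s, {e | δ j ≤ r j e} with hB
  have hBmeas : MeasurableSet B :=
    MeasurableSet.biUnion s.countable_toSet fun j _ =>
      measurableSet_le measurable_const (hrmeas j)
  have hBbound : (P B).toReal ≤ K * ∫ e, Gq e ∂P := by
    have h1 : (P B).toReal ≤ ∑ j ∈ s, (P {e | δ j ≤ r j e}).toReal := by
      have h2 : P B ≤ ∑ j ∈ s, P {e | δ j ≤ r j e} := measure_biUnion_finset_le _ _
      calc (P B).toReal ≤ (∑ j ∈ s, P {e | δ j ≤ r j e}).toReal :=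
            ENNReal.toReal_mono (by
              refine (ENNReal.sum_lt_top.2 fun j _ => measure_lt_top P _).ne) h2
        _ = ∑ j ∈ s, (P {e | δ j ≤ r j e}).toReal :=
            ENNReal.toReal_sum fun j _ => measure_ne_top P _
    calc (P B).toReal ≤ ∑ j ∈ s, (P {e | δ j ≤ r j e}).toReal := h1
      _ ≤ ∑ j ∈ s, (1 + δ j) / δ j * (2 ^ (j + 1) * ∫ e, Gq e ∂P) := by
          refine Finset.sum_le_sum fun j _ => ?_
          calc (P {e | δ j ≤ r j e}).toReal
              ≤ (1 + δ j) / δ j * ∫ e, r j e / (1 + r j e) ∂P :=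
                meas_ge_le P (hrmeas j) (fun e => hr0 j e) (hδpos j)
            _ ≤ (1 + δ j) / δ j * (2 ^ (j + 1) * ∫ e, Gq e ∂P) := by
                apply mul_le_mul_of_nonneg_left (hcomp_int j)
                have := hδpos j
                positivity
      _ = K * ∫ e, Gq e ∂P := by
          rw [hK, Finset.sum_mul]
          refine Finset.sum_congr rfl fun j _ => ?_
          ring
  -- pointwise estimate off the bad set
  have hgood : ∀ e, e ∉ B → dist (D.omegaMap g n e) (h e) < ε / 2 := by
    intro e he
    have hnotin : ∀ j ∈ s, r j e < δ j := by
      intro j hj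
      by_contra hcon
      push_neg at hcon
      exact he (Set.mem_biUnion hj hcon)
    have hgv : D.omegaMap g n e = ∑ j ∈ s, c j • F j ⟨n, e.1 n⟩ := hgsum _
    have hhv : h e = ∑ j ∈ s, c j • H e j := by
      rw [Finset.sum_eq_single j₀]
      · simp only [hH, if_pos rfl]
        exact (smul_inv_smul₀ hj₀ (h e)).symm
      · intro j hj hne
        simp [hH, if_neg hne]
      · intro hcontra
        exact absurd hj₀s hcontra
    rw [hgv, hhv]
    calc dist (∑ j ∈ s, c j • F j ⟨n, e.1 n⟩) (∑ j ∈ s, c j • H e j)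
        ≤ ∑ j ∈ s, dist (c j • F j ⟨n, e.1 n⟩) (c j • H e j) := dist_sum_le hdist _ _ _
      _ < ∑ j ∈ s, (ε / 2 / s.card) := by
          refine Finset.sum_lt_sum_of_nonempty ⟨j₀, hj₀s⟩ fun j hj => ?_
          have hd1 : dist (c j • F j ⟨n, e.1 n⟩) (c j • H e j)
              = dist (c j • (F j ⟨n, e.1 n⟩ - H e j)) 0 := by
            rw [dist_eq_sub hdist, smul_sub]
          rw [hd1]
          apply hδ j
          rw [← dist_eq_sub hdist]
          exact hnotin j hj
      _ = ε / 2 := by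
          rw [Finset.sum_const, nsmul_eq_mul]
          rw [mul_comm]; exact div_mul_cancel₀ (ε / 2) hm0.ne'
  -- final integral estimate
  have hfinal : D.dP P (D.omegaMap g n) h ≤ ε / 2 + (P B).toReal := by
    rw [TreeData.dP, TreeData.dPgen]
    have hle : ∀ e, dist (D.omegaMap g n e) (h e) / (1 + dist (D.omegaMap g n e) (h e))
        ≤ ε / 2 + B.indicator (fun _ => (1 : ℝ)) e := by
      intro e
      by_cases he : e ∈ B
      · calc _ ≤ (1:ℝ) := ratio_le_one' dist_nonneg
          _ ≤ ε / 2 + B.indicator (fun _ => (1 : ℝ)) e := by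
              rw [Set.indicator_of_mem he]
              linarith
      · calc dist (D.omegaMap g n e) (h e) / (1 + dist (D.omegaMap g n e) (h e))
            ≤ dist (D.omegaMap g n e) (h e) := by
              have h1 : (0:ℝ) ≤ dist (D.omegaMap g n e) (h e) := dist_nonneg
              rw [div_le_iff₀ (by linarith)]
              nlinarith
          _ ≤ ε / 2 := (hgood e he).le
          _ ≤ ε / 2 + B.indicator (fun _ => (1 : ℝ)) e := by
              rw [Set.indicator_of_notMem he]
              linarith
    calc ∫ e, dist (D.omegaMap g n e) (h e) / (1 + dist (D.omegaMap g n e) (h e)) ∂P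
        ≤ ∫ e, (ε / 2 + B.indicator (fun _ => (1 : ℝ)) e) ∂P := by
          refine integral_mono_of_nonneg (Filter.Eventually.of_forall fun e =>
            ratio_nonneg' dist_nonneg) ?_ (Filter.Eventually.of_forall hle)
          exact (integrable_const _).add ((integrable_const 1).indicator hBmeas)
      _ = ε / 2 + (P B).toReal := by
          rw [integral_add (integrable_const _) ((integrable_const 1).indicator hBmeas),
            integral_const, integral_indicator_const _ hBmeas]
          simp [mul_comm]
          rfl
  have hKfin : K * ∫ e, Gq e ∂P ≤ K * δstar :=
    mul_le_mul_of_nonneg_left hDn.le hK0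
  have : D.dP P (D.omegaMap g n) h ≤ ε / 2 + K * δstar := by
    calc D.dP P (D.omegaMap g n) h ≤ ε / 2 + (P B).toReal := hfinal
      _ ≤ ε / 2 + K * ∫ e, Gq e ∂P := by linarith
      _ ≤ ε / 2 + K * δstar := by linarith
  have hlt : ε / 2 + K * δstar < ε := by
    rw [hδstar]
    have hx : 0 < ε / (2 * (K + 1)) := by positivity
    have h2 : (K + 1) * (ε / (2 * (K + 1))) = ε / 2 := by
      field_simp
    have h3 : K * (ε / (2 * (K + 1))) < (K + 1) * (ε / (2 * (K + 1))) :=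
      mul_lt_mul_of_pos_right (lt_add_one K) hx
    linarith
  linarith
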